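/- arXiv:1611.06739 — 2 statements merged into one kernel-verified Lean document; each statement's English description precedes it below -/
import Mathlib

section
/- The confidence bound for the full set equals h: t({1,…,m}) = h. -/
open Finset

attribute [local instance] Classical.propDecidable

/-- The `i`-th smallest (1-indexed) element of the multiset of p-values `{p_j : j ∈ I}`. -/
noncomputable def pOrd {m : ℕ} (p : Fin m → ℝ) (I : Finset (Fin m)) (i : ℕ) : ℝ :=
  ((I.val.map p).sort (· ≤ ·)).getD (i - 1) 0

/-- The Simes local test rejects `H_I` (written `I ∈ 𝒰`) iff `I` is nonempty and
`|I|·p_{(i:I)} ≤ i·α` for at least one `1 ≤ i ≤ |I|`. -/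
def SimesU {m : ℕ} (α : ℝ) (p : Fin m → ℝ) (I : Finset (Fin m)) : Prop :=
  ∃ i, 1 ≤ i ∧ i ≤ I.card ∧ (I.card : ℝ) * pOrd p I i ≤ (i : ℝ) * α

/-- Closed testing rejects `H_I` (written `I ∈ 𝒳`) iff `J ∈ 𝒰` for every `J ⊇ I`. -/
def ClosedX {m : ℕ} (α : ℝ) (p : Fin m → ℝ) (I : Finset (Fin m)) : Prop :=
  ∀ J, I ⊆ J → SimesU α p J

/-- `K_i = {r_{m−i+1},…,r_m}`: the `i` indices with largest p-values. -/
def Kset {m : ℕ} (r : Fin m → Fin m) (i : ℕ) : Finset (Fin m) :=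
  (Finset.univ.filter fun j : Fin m => m - i ≤ (j : ℕ)).image r

/-- `L_i = {r_1,…,r_i}`: the `i` indices with smallest p-values. -/
def Lset {m : ℕ} (r : Fin m → Fin m) (i : ℕ) : Finset (Fin m) :=
  (Finset.univ.filter fun j : Fin m => (j : ℕ) < i).image r

/-- `h = max{0 ≤ i ≤ m : K_i ∉ 𝒰}`. -/
noncomputable def hval {m : ℕ} (α : ℝ) (p : Fin m → ℝ) (r : Fin m → Fin m) : ℕ :=
  sSup {i | i ≤ m ∧ ¬ SimesU α p (Kset r i)}

/-- `t(S) = max{|I| : I ⊆ S, I ∉ 𝒳}`. -/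
noncomputable def tval {m : ℕ} (α : ℝ) (p : Fin m → ℝ) (S : Finset (Fin m)) : ℕ :=
  sSup {k | ∃ I, I ⊆ S ∧ ¬ ClosedX α p I ∧ I.card = k}

/-- `d(S) = |S| − t(S)`. -/
noncomputable def dval {m : ℕ} (α : ℝ) (p : Fin m → ℝ) (S : Finset (Fin m)) : ℕ :=
  S.card - tval α p S

/-- `q_α(S) = t(S)/|S|` for nonempty `S`, and `0` for `S = ∅`. -/
noncomputable def qval {m : ℕ} (α : ℝ) (p : Fin m → ℝ) (S : Finset (Fin m)) : ℝ :=
  if S = ∅ then 0 else (tval α p S : ℝ) / S.card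

/-- `z = 0` if `h = m`, else `z = min{m−h ≤ i ≤ m : h·p_{(i)} ≤ (i−m+h+1)·α}`. -/
noncomputable def zval {m : ℕ} (α : ℝ) (p : Fin m → ℝ) (r : Fin m → Fin m) : ℕ :=
  if hval α p r = m then 0 else
    sInf {i | m - hval α p r ≤ i ∧ i ≤ m ∧
      (hval α p r : ℝ) * pOrd p Finset.univ i ≤ ((i : ℝ) - m + hval α p r + 1) * α}

/-- `b_q = max{1 ≤ i ≤ m : m·p_{(i)} ≤ i·q}` (with `b_q = 0` if no such `i`). -/
noncomputable def bval {m : ℕ} (q : ℝ) (p : Fin m → ℝ) : ℕ :=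
  sSup {i | 1 ≤ i ∧ i ≤ m ∧ (m : ℝ) * pOrd p Finset.univ i ≤ (i : ℝ) * q}

/-- If a sorted list has at least `i+1` elements `≤ x`, then its `i`-th element is `≤ x`. -/
lemma sorted_getD_le (l : List ℝ) (hl : l.Pairwise (· ≤ ·)) (x : ℝ) (i : ℕ)
    (h : i + 1 ≤ (l.filter (fun a => a ≤ x)).length) : l.getD i 0 ≤ x := by
  have hil : i < l.length := lt_of_lt_of_le h (List.length_filter_le _ _)
  rw [List.getD_eq_getElem l 0 hil]
  by_contra hx
  push_neg at hx
  have hdrop : ∀ a ∈ l.drop i, ¬ (a ≤ x) := by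
    intro a ha
    obtain ⟨⟨j, hj⟩, hget⟩ := List.mem_iff_get.mp ha
    have hij : i + j < l.length := by
      have := List.length_drop (i := i) (l := l) ▸ hj
      omega
    have : l.get ⟨i, hil⟩ ≤ l.get ⟨i + j, hij⟩ :=
      hl.rel_get_of_le (by simp)
    rw [show l.get ⟨i + j, hij⟩ = (l.drop i).get ⟨j, hj⟩ from by simp] at this
    simp only [List.get_eq_getElem] at this hget ⊢
    push_neg
    calc x < l[i] := hx
    _ ≤ _ := by rw [← hget]; exact this
  have hsplit : l.filter (fun a => decide (a ≤ x)) =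
      (l.take i).filter (fun a => decide (a ≤ x)) := by
    have hnil : (l.drop i).filter (fun a => decide (a ≤ x)) = [] :=
      List.filter_eq_nil_iff.mpr (by simpa using hdrop)
    conv_lhs => rw [← List.take_append_drop i l]
    rw [List.filter_append, hnil, List.append_nil]
  rw [hsplit] at h
  have h1 : ((l.take i).filter (fun a => decide (a ≤ x))).length ≤ (l.take i).length :=
    List.length_filter_le _ _
  have h2 : (l.take i).length ≤ i := by rw [List.length_take]; omega
  omega

lemma pOrd_le_of_count {m : ℕ} (p : Fin m → ℝ) (J : Finset (Fin m)) (i : ℕ) (x : ℝ)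
    (hi : 1 ≤ i) (h : i ≤ (J.filter (fun a => p a ≤ x)).card) : pOrd p J i ≤ x := by
  apply sorted_getD_le _ (Multiset.pairwise_sort _ _)
  have hc : ((Multiset.sort (J.val.map p) (· ≤ ·)).filter (fun a => decide (a ≤ x))).length
      = (J.filter (fun a => p a ≤ x)).card := by
    have : (Multiset.filter (· ≤ x) (J.val.map p)).card
        = (J.filter (fun a => p a ≤ x)).card := by
      rw [Multiset.filter_map, Multiset.card_map, Finset.card, Finset.filter_val]
      rfl
    rw [← this]
    conv_rhs => rw [← Multiset.sort_eq (J.val.map p) (· ≤ ·)]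
    rw [Multiset.filter_coe, Multiset.coe_card]
  omega




lemma simes_empty {m : ℕ} (α : ℝ) (p : Fin m → ℝ) : ¬ SimesU α p ∅ := by
  rintro ⟨i, h1, h2, -⟩
  simp at h2; omega

/-- embedding of the top `s` indices -/
def emb (m s : ℕ) (hs : s ≤ m) : Fin s → Fin m := fun j => ⟨m - s + j.val, by omega⟩

lemma emb_inj (m s : ℕ) (hs : s ≤ m) : Function.Injective (emb m s hs) := by
  intro a b hab
  have := Fin.val_eq_of_eq hab
  simp only [emb] at this
  exact Fin.ext (by omega)

lemma filter_eq_image (m s : ℕ) (hs : s ≤ m) :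
    (Finset.univ.filter fun j : Fin m => m - s ≤ (j : ℕ)) =
      (Finset.univ : Finset (Fin s)).image (emb m s hs) := by
  ext a
  simp only [Finset.mem_filter, Finset.mem_univ, true_and, Finset.mem_image, emb]
  constructor
  · intro h
    exact ⟨⟨a.val - (m - s), by omega⟩, Fin.ext (by simp; omega)⟩
  · rintro ⟨j, rfl⟩
    simp

lemma kset_card {m : ℕ} (r : Fin m → Fin m) (hr : Function.Injective r) (s : ℕ) (hs : s ≤ m) :
    (Kset r s).card = s := by
  rw [Kset, Finset.card_image_of_injective _ hr, filter_eq_image m s hs,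
    Finset.card_image_of_injective _ (emb_inj m s hs), Finset.card_univ, Fintype.card_fin]

lemma kset_val_map {m : ℕ} (p : Fin m → ℝ) (r : Fin m → Fin m) (hr : Function.Injective r)
    (s : ℕ) (hs : s ≤ m) :
    (Kset r s).val.map p = ↑(List.ofFn fun j : Fin s => p (r (emb m s hs j))) := by
  rw [Kset, Finset.image_val_of_injOn (hr.injOn), filter_eq_image m s hs,
    Finset.image_val_of_injOn ((emb_inj m s hs).injOn), Multiset.map_map, Multiset.map_map]
  exact Fin.univ_val_map _

lemma pOrd_kset {m : ℕ} (p : Fin m → ℝ) (r : Fin m → Fin m) (hr : Function.Injective r)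
    (hmono : ∀ i j : Fin m, i ≤ j → p (r i) ≤ p (r j))
    (s : ℕ) (hs : s ≤ m) (i : ℕ) (hi1 : 1 ≤ i) (hi2 : i ≤ s) :
    pOrd p (Kset r s) i = p (r (emb m s hs ⟨i - 1, by omega⟩)) := by
  set L := List.ofFn fun j : Fin s => p (r (emb m s hs j)) with hL
  have hsorted : L.Pairwise (· ≤ ·) := by
    apply List.pairwise_iff_get.mpr
    intro a b hab
    rw [List.get_ofFn, List.get_ofFn]
    apply hmono
    simp only [emb, Fin.le_def, Fin.coe_cast]
    have hab' : (a : ℕ) < b := hab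
    dsimp only [Fin.cast]
    omega
  have hsort : (((Kset r s).val.map p).sort (· ≤ ·)) = L := by
    apply List.Perm.eq_of_pairwise' (Multiset.pairwise_sort _ _) hsorted
    rw [← Multiset.coe_eq_coe, Multiset.sort_eq, kset_val_map p r hr s hs]
  rw [pOrd, hsort, hL]
  have hlen : i - 1 < L.length := by simp [hL]; omega
  rw [List.getD_eq_getElem _ _ (by simpa [hL] using hlen)]
  simp [List.getElem_ofFn]

lemma castLE_image (m k : ℕ) (hk : k ≤ m) :
    (Finset.univ.filter fun j : Fin m => (j : ℕ) < k) =
      (Finset.univ : Finset (Fin k)).image (Fin.castLE hk) := by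
  ext a
  simp only [Finset.mem_filter, Finset.mem_univ, true_and, Finset.mem_image]
  constructor
  · intro h
    exact ⟨⟨a.val, h⟩, Fin.ext (by simp)⟩
  · rintro ⟨j, rfl⟩
    simpa using j.isLt

lemma pOrd_le_pOrd_kset {m : ℕ} (p : Fin m → ℝ) (r : Fin m → Fin m)
    (hr : Function.Bijective r) (hmono : ∀ i j : Fin m, i ≤ j → p (r i) ≤ p (r j))
    (J : Finset (Fin m)) (s : ℕ) (hJ : J.card = s) (hs : s ≤ m)
    (i : ℕ) (hi1 : 1 ≤ i) (hi2 : i ≤ s) :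
    pOrd p J i ≤ pOrd p (Kset r s) i := by
  rw [pOrd_kset p r hr.injective hmono s hs i hi1 hi2]
  set x := p (r (emb m s hs ⟨i - 1, by omega⟩)) with hx
  apply pOrd_le_of_count p J i x hi1
  -- count elements globally ≤ x
  have hksm : m - s + i ≤ m := by omega
  set G := Finset.univ.filter fun j : Fin m => (j : ℕ) < m - s + i with hG
  have hGcard : G.card = m - s + i := by
    rw [hG, castLE_image m _ hksm, Finset.card_image_of_injective _ (Fin.castLE_injective _),
      Finset.card_univ, Fintype.card_fin]
  set A := Finset.univ.filter fun a : Fin m => p a ≤ x with hA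
  have hsub : G.image r ⊆ A := by
    intro a ha
    obtain ⟨j, hj, rfl⟩ := Finset.mem_image.mp ha
    rw [hG, Finset.mem_filter] at hj
    rw [hA, Finset.mem_filter]
    refine ⟨Finset.mem_univ _, ?_⟩
    rw [hx]
    apply hmono
    simp only [emb, Fin.le_def]
    omega
  have hAcard : m - s + i ≤ A.card := by
    calc m - s + i = (G.image r).card := by
          rw [Finset.card_image_of_injective _ hr.injective, hGcard]
    _ ≤ A.card := Finset.card_le_card hsub
  -- A is covered by J.filter and univ \ J
  have hcover : A ⊆ (J.filter fun a => p a ≤ x) ∪ (Finset.univ \ J) := by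
    intro a ha
    rw [hA, Finset.mem_filter] at ha
    by_cases haJ : a ∈ J
    · exact Finset.mem_union_left _ (Finset.mem_filter.mpr ⟨haJ, ha.2⟩)
    · exact Finset.mem_union_right _ (Finset.mem_sdiff.mpr ⟨Finset.mem_univ _, haJ⟩)
  have hcompl : (Finset.univ \ J).card = m - s := by
    rw [Finset.card_sdiff_of_subset (Finset.subset_univ _), Finset.card_univ, Fintype.card_fin, hJ]
  have := (Finset.card_le_card hcover).trans (Finset.card_union_le _ _)
  rw [hcompl] at this
  omega

lemma not_simes_kset {m : ℕ} (α : ℝ) (p : Fin m → ℝ) (r : Fin m → Fin m)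
    (hr : Function.Bijective r) (hmono : ∀ i j : Fin m, i ≤ j → p (r i) ≤ p (r j))
    (J : Finset (Fin m)) (hJ : ¬ SimesU α p J) : ¬ SimesU α p (Kset r J.card) := by
  set s := J.card with hs
  have hsm : s ≤ m := by
    rw [hs]
    simpa using Finset.card_le_univ J
  rintro ⟨i, hi1, hi2, hle⟩
  rw [kset_card r hr.injective s hsm] at hi2 hle
  apply hJ
  refine ⟨i, hi1, by omega, ?_⟩
  rw [← hs]
  calc (s : ℝ) * pOrd p J i ≤ (s : ℝ) * pOrd p (Kset r s) i := by
        apply mul_le_mul_of_nonneg_left _ (by positivity)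
        exact pOrd_le_pOrd_kset p r hr hmono J s rfl hsm i hi1 hi2
  _ ≤ (i : ℝ) * α := hle

theorem stmt1
    (m : ℕ) (hm : 1 ≤ m) (α : ℝ) (hα : 0 ≤ α ∧ α ≤ 1)
    (p : Fin m → ℝ) (hp : ∀ i, 0 ≤ p i ∧ p i ≤ 1)
    (r : Fin m → Fin m) (hr : Function.Bijective r)
    (hmono : ∀ i j : Fin m, i ≤ j → p (r i) ≤ p (r j)) :
    tval α p Finset.univ = hval α p r := by
  have hrinj := hr.injective
  have hK0 : Kset r 0 = (∅ : Finset (Fin m)) := by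
    rw [Kset]
    have : (Finset.univ.filter fun j : Fin m => m - 0 ≤ (j : ℕ)) = ∅ := by
      ext j
      simp only [Finset.mem_filter, Finset.mem_univ, true_and, Finset.notMem_empty, iff_false]
      have := j.isLt
      omega
    rw [this, Finset.image_empty]
  set Sh := {i | i ≤ m ∧ ¬ SimesU α p (Kset r i)} with hSh
  have h0 : (0 : ℕ) ∈ Sh := ⟨Nat.zero_le m, by rw [hK0]; exact simes_empty α p⟩
  have hbdd : BddAbove Sh := ⟨m, fun x hx => hx.1⟩
  have hmem : hval α p r ∈ Sh := Nat.sSup_mem ⟨0, h0⟩ hbdd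
  set T := {k | ∃ I : Finset (Fin m), I ⊆ Finset.univ ∧ ¬ ClosedX α p I ∧ I.card = k} with hT
  have h0T : (0 : ℕ) ∈ T :=
    ⟨∅, Finset.empty_subset _, fun hc => simes_empty α p (hc ∅ (Finset.Subset.refl _)), rfl⟩
  have hbddT : BddAbove T := by
    refine ⟨m, ?_⟩
    rintro k ⟨I, -, -, rfl⟩
    simpa using Finset.card_le_univ I
  rw [tval, hval, ← hSh, ← hT]
  apply le_antisymm
  · apply csSup_le ⟨0, h0T⟩
    rintro k ⟨I, -, hnc, rfl⟩
    rw [ClosedX] at hnc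
    push_neg at hnc
    obtain ⟨J, hIJ, hJ⟩ := hnc
    have hJm : J.card ≤ m := by simpa using Finset.card_le_univ J
    have hmemJ : J.card ∈ Sh := ⟨hJm, not_simes_kset α p r hr hmono J hJ⟩
    exact le_trans (Finset.card_le_card hIJ) (le_csSup hbdd hmemJ)
  · apply le_csSup hbddT
    exact ⟨Kset r (hval α p r), Finset.subset_univ _,
      fun hc => hmem.2 (hc _ (Finset.Subset.refl _)), kset_card r hrinj _ hmem.1⟩
end

section
/- (Exact shortcut) For every nonempty S ⊆ {1,…,m}: d(S) = max over integers 1 ≤ u ≤ |S| of (1 − u + |{i ∈ S : h·p_i ≤ u·α}|). -/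
open Finset

attribute [local instance] Classical.propDecidable

theorem sorted_get_le_iff (l : List ℝ) (hs : l.Pairwise (· ≤ ·)) (n : ℕ) (hn : n < l.length) (c : ℝ) :
    l.get ⟨n, hn⟩ ≤ c ↔ n + 1 ≤ l.countP (fun x => x ≤ c) := by
  constructor
  · intro hle
    have h1 : l.countP (fun x => x ≤ c) = (l.take (n+1)).countP (fun x => x ≤ c) + (l.drop (n+1)).countP (fun x => x ≤ c) := by
      rw [← List.countP_append, List.take_append_drop]
    have h2 : (l.take (n+1)).countP (fun x => x ≤ c) = (l.take (n+1)).length := by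
      rw [List.countP_eq_length]
      intro x hx
      obtain ⟨j, hj, rfl⟩ := List.mem_take_iff_getElem.mp hx
      have hj' : j < l.length := lt_of_lt_of_le (lt_min_iff.mp hj).1 (by omega)
      have : l.get ⟨j, hj'⟩ ≤ l.get ⟨n, hn⟩ :=
        hs.rel_get_of_le (by simpa using Nat.le_of_lt_succ (lt_min_iff.mp hj).1)
      simp only [List.get_eq_getElem] at this
      simpa using le_trans this hle
    have h3 : (l.take (n+1)).length = n + 1 := by
      simp [Nat.min_eq_left]
      omega
    omega
  · intro hc
    by_contra hgt
    push_neg at hgt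
    have h1 : l.countP (fun x => x ≤ c) = (l.take n).countP (fun x => x ≤ c) + (l.drop n).countP (fun x => x ≤ c) := by
      rw [← List.countP_append, List.take_append_drop]
    have h2 : (l.drop n).countP (fun x => x ≤ c) = 0 := by
      rw [List.countP_eq_zero]
      intro x hx
      obtain ⟨j, hj, rfl⟩ := List.mem_iff_getElem.mp hx
      have hnj : n + j < l.length := by simp at hj; omega
      rw [List.getElem_drop]
      intro hxc
      have : l.get ⟨n, hn⟩ ≤ l.get ⟨n + j, hnj⟩ := hs.rel_get_of_le (by simp)
      simp only [List.get_eq_getElem] at this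
      simp only [decide_eq_true_eq] at hxc
      simp only [List.get_eq_getElem] at hgt; exact absurd (le_trans this hxc) (not_le.mpr hgt)
    have h4 := List.countP_le_length (l := l.take n) (p := fun x => decide (x ≤ c))
    have h5 : (l.take n).length ≤ n := by simp
    omega

theorem pOrd_le_iff {m : ℕ} (p : Fin m → ℝ) (J : Finset (Fin m)) (i : ℕ)
    (h1 : 1 ≤ i) (h2 : i ≤ J.card) (c : ℝ) :
    pOrd p J i ≤ c ↔ i ≤ (J.filter fun x => p x ≤ c).card := by
  set l := (J.val.map p).sort (· ≤ ·) with hl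
  have hlen : l.length = J.card := by
    rw [hl, Multiset.length_sort, Multiset.card_map]; rfl
  have hn : i - 1 < l.length := by omega
  have hsorted : l.Pairwise (· ≤ ·) := Multiset.pairwise_sort _ _
  have hget : pOrd p J i = l.get ⟨i - 1, hn⟩ := by
    rw [pOrd, ← hl, List.getD_eq_getElem _ _ hn]; rfl
  rw [hget, sorted_get_le_iff l hsorted (i-1) hn c]
  have hcount : l.countP (fun x => x ≤ c) = (J.filter fun x => p x ≤ c).card := by
    have e1 : (J.val.map p) = (l : Multiset ℝ) := (Multiset.sort_eq _ _).symm
    have e2 : Multiset.countP (fun x => x ≤ c) (J.val.map p) = l.countP (fun x => x ≤ c) := by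
      rw [e1]; exact Multiset.coe_countP _ _
    rw [← e2, Multiset.countP_map]
    simp [Finset.card_def, Finset.filter_val]
  rw [hcount]
  omega

theorem simes_iff {m : ℕ} (α : ℝ) (p : Fin m → ℝ) (J : Finset (Fin m)) :
    SimesU α p J ↔ ∃ i, 1 ≤ i ∧ i ≤ J.card ∧
      i ≤ (J.filter fun x => (J.card : ℝ) * p x ≤ (i : ℝ) * α).card := by
  have hcard : ∀ i : ℕ, 1 ≤ i → i ≤ J.card →
      ((J.card : ℝ) * pOrd p J i ≤ (i:ℝ) * α ↔ i ≤ (J.filter fun x => (J.card : ℝ) * p x ≤ (i : ℝ) * α).card) := by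
    intro i hi1 hi2
    have hpos : (0:ℝ) < J.card := by
      have : 0 < J.card := by omega
      exact_mod_cast this
    have hset : (J.filter fun x => (J.card : ℝ) * p x ≤ (i : ℝ) * α)
        = (J.filter fun x => p x ≤ (i : ℝ) * α / J.card) := by
      apply Finset.filter_congr
      intro x _
      rw [le_div_iff₀ hpos, mul_comm]
    rw [hset, ← pOrd_le_iff p J i hi1 hi2, le_div_iff₀ hpos, mul_comm]
  constructor
  · rintro ⟨i, hi1, hi2, hi3⟩; exact ⟨i, hi1, hi2, (hcard i hi1 hi2).mp hi3⟩
  · rintro ⟨i, hi1, hi2, hi3⟩; exact ⟨i, hi1, hi2, (hcard i hi1 hi2).mpr hi3⟩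

theorem card_Kset {m : ℕ} (r : Fin m → Fin m) (hr : Function.Bijective r) (l : ℕ) (hl : l ≤ m) :
    (Kset r l).card = l := by
  rw [Kset, Finset.card_image_of_injective _ hr.injective]
  rcases Nat.eq_zero_or_pos l with rfl | hpos
  · convert Finset.card_empty
    rw [Finset.filter_eq_empty_iff]
    intro j _
    simp only [Nat.sub_zero, not_le]
    exact j.isLt
  · have hm : 0 < m := by omega
    have : (Finset.univ.filter fun j : Fin m => m - l ≤ (j : ℕ)) = Finset.Ici (⟨m - l, by omega⟩ : Fin m) := by
      ext j
      simp [Fin.le_def]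
    rw [this, Fin.card_Ici]
    simp
    omega

theorem top_Kset {m : ℕ} (p : Fin m → ℝ) (r : Fin m → Fin m) (hr : Function.Bijective r)
    (hmono : ∀ i j : Fin m, i ≤ j → p (r i) ≤ p (r j)) (l : ℕ)
    {x y : Fin m} (hy : y ∈ Kset r l) (hx : x ∉ Kset r l) : p x ≤ p y := by
  obtain ⟨a, rfl⟩ := hr.surjective x
  obtain ⟨b, hb, rfl⟩ := Finset.mem_image.mp hy
  simp only [Finset.mem_filter, Finset.mem_univ, true_and] at hb
  have ha : ¬ (m - l ≤ (a : ℕ)) := by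
    intro hcon
    exact hx (Finset.mem_image.mpr ⟨a, Finset.mem_filter.mpr ⟨Finset.mem_univ _, hcon⟩, rfl⟩)
  exact hmono a b (by omega)

theorem not_simes_empty {m : ℕ} (α : ℝ) (p : Fin m → ℝ) : ¬ SimesU α p (∅ : Finset (Fin m)) := by
  rintro ⟨i, hi1, hi2, -⟩
  simp at hi2
  omega

theorem Kset_zero {m : ℕ} (r : Fin m → Fin m) : Kset r 0 = ∅ := by
  rw [Kset, Finset.filter_eq_empty_iff.mpr, Finset.image_empty]
  intro j _
  simp only [Nat.sub_zero, not_le]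
  exact j.isLt

theorem hval_spec {m : ℕ} (α : ℝ) (p : Fin m → ℝ) (r : Fin m → Fin m) :
    hval α p r ≤ m ∧ ¬ SimesU α p (Kset r (hval α p r)) := by
  have hne : {i | i ≤ m ∧ ¬ SimesU α p (Kset r i)}.Nonempty :=
    ⟨0, Nat.zero_le m, by rw [Kset_zero]; exact not_simes_empty α p⟩
  have hbdd : BddAbove {i | i ≤ m ∧ ¬ SimesU α p (Kset r i)} := ⟨m, fun x hx => hx.1⟩
  exact Nat.sSup_mem hne hbdd

theorem hval_max {m : ℕ} (α : ℝ) (p : Fin m → ℝ) (r : Fin m → Fin m) (l : ℕ)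
    (hl : l ≤ m) (hgt : hval α p r < l) : SimesU α p (Kset r l) := by
  by_contra hcon
  have : l ≤ hval α p r := le_csSup ⟨m, fun x hx => hx.1⟩ ⟨hl, hcon⟩
  omega

theorem exists_not_closedX_card_eq_tval {m : ℕ} (α : ℝ) (p : Fin m → ℝ) (S : Finset (Fin m)) :
    ∃ I, I ⊆ S ∧ ¬ ClosedX α p I ∧ I.card = tval α p S := by
  have hne : {k | ∃ I, I ⊆ S ∧ ¬ ClosedX α p I ∧ I.card = k}.Nonempty := by
    refine ⟨0, ∅, Finset.empty_subset S, ?_, Finset.card_empty⟩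
    intro hcon
    exact not_simes_empty α p (hcon ∅ (Finset.Subset.refl _))
  have hbdd : BddAbove {k | ∃ I, I ⊆ S ∧ ¬ ClosedX α p I ∧ I.card = k} := by
    refine ⟨S.card, ?_⟩
    rintro k ⟨I, hIS, -, rfl⟩
    exact Finset.card_le_card hIS
  exact Nat.sSup_mem hne hbdd

theorem card_le_tval {m : ℕ} (α : ℝ) (p : Fin m → ℝ) (S I : Finset (Fin m))
    (hIS : I ⊆ S) (hI : ¬ ClosedX α p I) : I.card ≤ tval α p S := by
  refine le_csSup ?_ ⟨I, hIS, hI, rfl⟩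
  refine ⟨S.card, ?_⟩
  rintro k ⟨I', hIS', -, rfl⟩
  exact Finset.card_le_card hIS'

theorem greedy {m : ℕ} (p : Fin m → ℝ) (w : ℕ) :
    ∀ A : Finset (Fin m), w ≤ A.card →
    ∃ T, T ⊆ A ∧ T.card = w ∧ ∀ x ∈ A \ T, ∀ y ∈ T, p x ≤ p y := by
  induction w with
  | zero => exact fun A _ => ⟨∅, Finset.empty_subset A, Finset.card_empty, by simp⟩
  | succ n ih =>
    intro A hw
    obtain ⟨y, hyA, hymax⟩ := Finset.exists_max_image A p (Finset.card_pos.mp (by omega))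
    obtain ⟨T', hT'A, hT'card, hT'max⟩ := ih (A.erase y) (by rw [Finset.card_erase_of_mem hyA]; omega)
    have hyT' : y ∉ T' := fun hcon => (Finset.mem_erase.mp (hT'A hcon)).1 rfl
    refine ⟨insert y T', ?_, ?_, ?_⟩
    · intro x hx
      rcases Finset.mem_insert.mp hx with rfl | hx
      · exact hyA
      · exact Finset.erase_subset _ _ (hT'A hx)
    · rw [Finset.card_insert_of_notMem hyT', hT'card]
    · intro x hx z hz
      have hxA : x ∈ A := (Finset.mem_sdiff.mp hx).1
      have hxT : x ∉ insert y T' := (Finset.mem_sdiff.mp hx).2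
      rcases Finset.mem_insert.mp hz with rfl | hz
      · exact hymax x hxA
      · refine hT'max x ?_ z hz
        rw [Finset.mem_sdiff, Finset.mem_erase]
        exact ⟨⟨fun hcon => hxT (by rw [hcon]; exact Finset.mem_insert_self _ _),
          hxA⟩, fun hcon => hxT (Finset.mem_insert_of_mem hcon)⟩

theorem trans_count {m : ℕ} (p : Fin m → ℝ) (r : Fin m → Fin m) (hr : Function.Bijective r)
    (hmono : ∀ i j : Fin m, i ≤ j → p (r i) ≤ p (r j)) (l : ℕ) (hl : l ≤ m)
    (B : Finset (Fin m)) (hB : l ≤ B.card) (Q : Fin m → Prop)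
    (hQ : ∀ x y, p x ≤ p y → Q y → Q x) :
    ((Kset r l).filter Q).card ≤ (B.filter Q).card := by
  by_cases hcase : ∃ x, x ∉ Kset r l ∧ ¬ Q x
  · obtain ⟨x, hx, hQx⟩ := hcase
    have : (Kset r l).filter Q = ∅ := by
      rw [Finset.filter_eq_empty_iff]
      intro y hy hQy
      exact hQx (hQ x y (top_Kset p r hr hmono l hy hx) hQy)
    simp [this]
  · push_neg at hcase
    have hsub : B.filter (fun x => ¬ Q x) ⊆ (Kset r l).filter (fun x => ¬ Q x) := by
      intro x hx
      rw [Finset.mem_filter] at hx ⊢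
      refine ⟨?_, hx.2⟩
      by_contra hcon
      exact hx.2 (hcase x hcon)
    have h1 := Finset.card_filter_add_card_filter_not (s := B) (p := Q)
    have h2 := Finset.card_filter_add_card_filter_not (s := Kset r l) (p := Q)
    have h3 : (B.filter fun x => ¬ Q x).card ≤ ((Kset r l).filter fun x => ¬ Q x).card :=
      Finset.card_le_card hsub
    have h4 : (Kset r l).card = l := card_Kset r hr l hl
    omega

theorem card_filter_congr {γ : Type*} {s : Finset γ} {P Q : γ → Prop}
    [DecidablePred P] [DecidablePred Q] (h : ∀ x, P x ↔ Q x) :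
    (s.filter P).card = (s.filter Q).card := by
  rw [Finset.filter_congr (fun x _ => h x)]

theorem L1 {m : ℕ} (α : ℝ) (p : Fin m → ℝ) (r : Fin m → Fin m) (hα0 : 0 ≤ α) (hp0 : ∀ i, 0 ≤ p i) (hr : Function.Bijective r)
    (hmono : ∀ i j : Fin m, i ≤ j → p (r i) ≤ p (r j)) (I : Finset (Fin m)) (u : ℕ) (hu : 1 ≤ u)
    (hcount : u ≤ (I.filter fun x => (hval α p r : ℝ) * p x ≤ (u : ℝ) * α).card) :
    ClosedX α p I := by
  intro J hIJ
  have hIcard : u ≤ I.card := le_trans hcount (Finset.card_filter_le _ _)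
  have hJcard : u ≤ J.card := le_trans hIcard (Finset.card_le_card hIJ)
  have hJm : J.card ≤ m := by
    have := Finset.card_le_univ J
    simpa using this
  rw [simes_iff]
  by_cases hcase : J.card ≤ hval α p r
  · refine ⟨u, hu, hJcard, ?_⟩
    refine le_trans hcount (Finset.card_le_card ?_)
    intro x hx
    rw [Finset.mem_filter] at hx ⊢
    refine ⟨hIJ hx.1, ?_⟩
    refine le_trans ?_ hx.2
    have : (J.card : ℝ) ≤ (hval α p r : ℝ) := by exact_mod_cast hcase
    exact mul_le_mul_of_nonneg_right this (hp0 x)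
  · push_neg at hcase
    have hUK := hval_max α p r J.card hJm hcase
    rw [simes_iff, card_Kset r hr J.card hJm] at hUK
    obtain ⟨i, hi1, hi2, hi3⟩ := hUK
    refine ⟨i, hi1, hi2, le_trans hi3 ?_⟩
    refine trans_count p r hr hmono J.card hJm J le_rfl _ ?_
    intro x y hxy hQy
    refine le_trans ?_ hQy
    exact mul_le_mul_of_nonneg_left hxy (by positivity)

theorem L2 {m : ℕ} (α : ℝ) (p : Fin m → ℝ) (r : Fin m → Fin m) (hα0 : 0 ≤ α) (hp0 : ∀ i, 0 ≤ p i) (hr : Function.Bijective r)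
    (hmono : ∀ i j : Fin m, i ≤ j → p (r i) ≤ p (r j)) (I : Finset (Fin m))
    (hcond : ∀ u, 1 ≤ u → u ≤ I.card →
      (I.filter fun x => (hval α p r : ℝ) * p x ≤ (u : ℝ) * α).card < u) :
    ¬ ClosedX α p I := by
  obtain ⟨hhm, hhK⟩ := hval_spec α p r
  set h := hval α p r with hh
  have hIm : I.card ≤ m := by simpa using Finset.card_le_univ I
  -- step 1 : I.card ≤ h
  have hk : I.card ≤ h := by
    by_contra hcon
    push_neg at hcon
    have h1m : h + 1 ≤ m := by omega
    have hUK := hval_max α p r (h+1) h1m (by omega)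
    rw [simes_iff, card_Kset r hr (h+1) h1m] at hUK
    obtain ⟨i, hi1, hi2, hi3⟩ := hUK
    have hi3' : i ≤ ((Kset r (h+1)).filter fun x => (h : ℝ) * p x ≤ (i : ℝ) * α).card := by
      refine le_trans hi3 (Finset.card_le_card ?_)
      intro x hx
      rw [Finset.mem_filter] at hx ⊢
      refine ⟨hx.1, le_trans ?_ hx.2⟩
      have : (h : ℝ) ≤ ((h : ℕ) + 1 : ℕ) := by exact_mod_cast Nat.le_succ h
      exact mul_le_mul_of_nonneg_right this (hp0 x)
    have htr := trans_count p r hr hmono (h+1) h1m I (by omega)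
      (fun x => (h : ℝ) * p x ≤ (i : ℝ) * α)
      (fun x y hxy hQy => le_trans (mul_le_mul_of_nonneg_left hxy (by positivity)) hQy)
    have := hcond i hi1 (by omega)
    omega
  -- step 2 : construct witness J = I ∪ T
  have hcompl : (Finset.univ \ I).card = m - I.card := by
    rw [Finset.card_sdiff_of_subset (Finset.subset_univ I)]
    simp
  obtain ⟨T, hTA, hTcard, hTtop⟩ := greedy p (h - I.card) (Finset.univ \ I) (by omega)
  have hdisj : Disjoint I T := by
    rw [Finset.disjoint_left]
    intro x hxI hxT
    exact (Finset.mem_sdiff.mp (hTA hxT)).2 hxI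
  set J := I ∪ T with hJ
  have hJcard : J.card = h := by
    rw [hJ, Finset.card_union_of_disjoint hdisj, hTcard]
    omega
  intro hclosed
  have hUJ := hclosed J Finset.subset_union_left
  rw [simes_iff, hJcard] at hUJ
  obtain ⟨i, hi1, hi2, hi3⟩ := hUJ
  set Small := fun x => (h : ℝ) * p x ≤ (i : ℝ) * α with hSmall
  replace hi3 : i ≤ (J.filter Small).card :=
    le_trans hi3 (le_of_eq (card_filter_congr (fun x => Iff.rfl)))
  have hJfilter : (J.filter Small).card = (I.filter Small).card + (T.filter Small).card := by
    rw [hJ, Finset.filter_union]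
    exact Finset.card_union_of_disjoint (Finset.disjoint_filter_filter hdisj)
  have ha : (I.filter Small).card < i := by
    by_cases hik : i ≤ I.card
    · exact lt_of_le_of_lt (le_of_eq (card_filter_congr (fun x => Iff.rfl))) (hcond i hi1 hik)
    · push_neg at hik
      exact lt_of_le_of_lt (le_trans (Finset.card_filter_le _ _) (le_refl I.card)) hik
  rcases Nat.eq_zero_or_pos (T.filter Small).card with hb | hb
  · omega
  · obtain ⟨y, hy⟩ := Finset.card_pos.mp hb
    rw [Finset.mem_filter] at hy
    -- everything in (univ \ I) \ T is Small
    have hsub : ∀ x ∈ (Finset.univ \ I) \ T, Small x := by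
      intro x hx
      have hpx : p x ≤ p y := hTtop x hx y hy.1
      exact le_trans (mul_le_mul_of_nonneg_left hpx (by positivity)) hy.2
    -- global upper bound on Small count
    have hKcount : ((Kset r h).filter Small).card < i := by
      rw [simes_iff, card_Kset r hr h hhm] at hhK
      push_neg at hhK
      exact lt_of_le_of_lt (le_of_eq (card_filter_congr (fun x => Iff.rfl))) (hhK i hi1 hi2)
    have hglobal : (Finset.univ.filter Small).card ≤ ((Kset r h).filter Small).card + (m - h) := by
      have hsub2 : Finset.univ.filter Small ⊆ ((Kset r h).filter Small) ∪ (Finset.univ \ Kset r h) := by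
        intro x hx
        rw [Finset.mem_union, Finset.mem_filter] at *
        by_cases hxK : x ∈ Kset r h
        · exact Or.inl ⟨hxK, hx.2⟩
        · exact Or.inr (Finset.mem_sdiff.mpr ⟨Finset.mem_univ x, hxK⟩)
      refine le_trans (Finset.card_le_card hsub2) ?_
      refine le_trans (Finset.card_union_le _ _) ?_
      have : (Finset.univ \ Kset r h).card = m - h := by
        rw [Finset.card_sdiff_of_subset (Finset.subset_univ _), card_Kset r hr h hhm]
        simp
      omega
    -- lower bound
    have hlower : (m - h) + (I.filter Small).card + (T.filter Small).card
        ≤ (Finset.univ.filter Small).card := by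
      have hU1 : ((Finset.univ \ I) \ T).card = m - h := by
        rw [Finset.card_sdiff_of_subset hTA, hcompl, hTcard]
        omega
      have hsubU : (((Finset.univ \ I) \ T) ∪ (I.filter Small)) ∪ (T.filter Small)
          ⊆ Finset.univ.filter Small := by
        intro x hx
        rw [Finset.mem_union, Finset.mem_union] at hx
        rw [Finset.mem_filter]
        rcases hx with (hx | hx) | hx
        · exact ⟨Finset.mem_univ x, hsub x hx⟩
        · exact ⟨Finset.mem_univ x, (Finset.mem_filter.mp hx).2⟩
        · exact ⟨Finset.mem_univ x, (Finset.mem_filter.mp hx).2⟩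
      have hd1 : Disjoint ((Finset.univ \ I) \ T) (I.filter Small) := by
        rw [Finset.disjoint_left]
        intro x hx hxI
        exact (Finset.mem_sdiff.mp (Finset.mem_sdiff.mp hx).1).2 (Finset.mem_filter.mp hxI).1
      have hd2 : Disjoint (((Finset.univ \ I) \ T) ∪ (I.filter Small)) (T.filter Small) := by
        rw [Finset.disjoint_left]
        intro x hx hxT
        have hxT' : x ∈ T := (Finset.mem_filter.mp hxT).1
        rcases Finset.mem_union.mp hx with hx | hx
        · exact (Finset.mem_sdiff.mp hx).2 hxT'
        · exact Finset.disjoint_left.mp hdisj (Finset.mem_filter.mp hx).1 hxT'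
      have := Finset.card_le_card hsubU
      rw [Finset.card_union_of_disjoint hd2, Finset.card_union_of_disjoint hd1, hU1] at this
      omega
    omega


theorem stmt4
    (m : ℕ) (hm : 1 ≤ m) (α : ℝ) (hα : 0 ≤ α ∧ α ≤ 1)
    (p : Fin m → ℝ) (hp : ∀ i, 0 ≤ p i ∧ p i ≤ 1)
    (r : Fin m → Fin m) (hr : Function.Bijective r)
    (hmono : ∀ i j : Fin m, i ≤ j → p (r i) ≤ p (r j))
    (S : Finset (Fin m)) (hS : S.Nonempty) :
    (dval α p S : ℤ) =
      (Finset.Icc 1 S.card).sup' (Finset.nonempty_Icc.mpr hS.card_pos)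
        (fun u => 1 - (u : ℤ) +
          ((S.filter fun i => (hval α p r : ℝ) * p i ≤ (u : ℝ) * α).card : ℤ)) := by
  have hp0 : ∀ i, 0 ≤ p i := fun i => (hp i).1
  set h := hval α p r with hh
  set n := S.card with hn
  have hne := Finset.nonempty_Icc.mpr (show 1 ≤ n from hS.card_pos)
  obtain ⟨I₀, hI₀S, hI₀X, hI₀card⟩ := exists_not_closedX_card_eq_tval α p S
  have ht_le : tval α p S ≤ n := hI₀card ▸ Finset.card_le_card hI₀S
  set Mz := (Finset.Icc 1 n).sup' hne
      (fun u => 1 - (u : ℤ) +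
        ((S.filter fun i => (h : ℝ) * p i ≤ (u : ℝ) * α).card : ℤ)) with hMz
  have hdval : (dval α p S : ℤ) = (n : ℤ) - (tval α p S : ℤ) := by
    rw [dval, ← hn]
    push_cast [Nat.cast_sub ht_le]
    ring
  rw [hdval]
  -- direction A : sup' ≤ n - t
  have dirA : Mz ≤ (n : ℤ) - (tval α p S : ℤ) := by
    rw [hMz]
    refine Finset.sup'_le _ _ ?_
    intro u hu
    rw [Finset.mem_Icc] at hu
    have hIA : (I₀.filter fun i => (h : ℝ) * p i ≤ (u : ℝ) * α).card < u := by
      by_contra hcon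
      push_neg at hcon
      exact hI₀X (L1 α p r hα.1 hp0 hr hmono I₀ u hu.1 hcon)
    have h1 : I₀.card + (S.filter fun i => (h : ℝ) * p i ≤ (u : ℝ) * α).card
        = (I₀ ∪ S.filter fun i => (h : ℝ) * p i ≤ (u : ℝ) * α).card
          + (I₀ ∩ S.filter fun i => (h : ℝ) * p i ≤ (u : ℝ) * α).card :=
      (Finset.card_union_add_card_inter _ _).symm
    have h2 : (I₀ ∪ S.filter fun i => (h : ℝ) * p i ≤ (u : ℝ) * α).card ≤ n := by
      rw [hn]
      refine Finset.card_le_card ?_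
      intro x hx
      rcases Finset.mem_union.mp hx with hx | hx
      · exact hI₀S hx
      · exact Finset.mem_of_mem_filter x hx
    have h3 : (I₀ ∩ S.filter fun i => (h : ℝ) * p i ≤ (u : ℝ) * α).card
        ≤ (I₀.filter fun i => (h : ℝ) * p i ≤ (u : ℝ) * α).card := by
      refine Finset.card_le_card ?_
      intro x hx
      rw [Finset.mem_inter] at hx
      exact Finset.mem_filter.mpr ⟨hx.1, (Finset.mem_filter.mp hx.2).2⟩
    have h4 : tval α p S + (S.filter fun i => (h : ℝ) * p i ≤ (u : ℝ) * α).card + 1 ≤ n + u := by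
      omega
    have := hu.1
    zify at h4
    omega
  -- direction B : n - t ≤ sup'
  have hM0 : (0 : ℤ) ≤ Mz := by
    rw [hMz]
    refine le_trans ?_ (Finset.le_sup' (fun v : ℕ => 1 - (v : ℤ) +
      ((S.filter fun x => (h : ℝ) * p x ≤ (v : ℝ) * α).card : ℤ))
      (Finset.mem_Icc.mpr ⟨le_refl 1, hn ▸ hS.card_pos⟩))
    simp
  have hMn : Mz ≤ (n : ℤ) := by
    rw [hMz]
    refine Finset.sup'_le _ _ ?_
    intro u hu
    rw [Finset.mem_Icc] at hu
    have hcard : (S.filter fun i => (h : ℝ) * p i ≤ (u : ℝ) * α).card ≤ n :=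
      hn ▸ Finset.card_filter_le _ _
    have := hu.1
    zify at hcard this
    omega
  set Mn := Mz.toNat with hMnat
  have hMzn : (Mn : ℤ) = Mz := Int.toNat_of_nonneg hM0
  have hMn_le : Mn ≤ n := by omega
  obtain ⟨T, hTS, hTcard, hTtop⟩ := greedy p (n - Mn) S (by omega)
  have hcond : ∀ u, 1 ≤ u → u ≤ T.card →
      (T.filter fun x => (h : ℝ) * p x ≤ (u : ℝ) * α).card < u := by
    intro u hu1 hu2
    by_contra hcon
    push_neg at hcon
    obtain ⟨y, hy⟩ := Finset.card_pos.mp (lt_of_lt_of_le hu1 hcon)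
    rw [Finset.mem_filter] at hy
    have hsub : (S \ T) ∪ (T.filter fun x => (h : ℝ) * p x ≤ (u : ℝ) * α)
        ⊆ S.filter fun x => (h : ℝ) * p x ≤ (u : ℝ) * α := by
      intro x hx
      rcases Finset.mem_union.mp hx with hx | hx
      · refine Finset.mem_filter.mpr ⟨(Finset.mem_sdiff.mp hx).1, ?_⟩
        have hpx : p x ≤ p y := hTtop x hx y hy.1
        exact le_trans (mul_le_mul_of_nonneg_left hpx (by positivity)) hy.2
      · exact Finset.mem_filter.mpr ⟨hTS (Finset.mem_filter.mp hx).1, (Finset.mem_filter.mp hx).2⟩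
    have hdisj : Disjoint (S \ T) (T.filter fun x => (h : ℝ) * p x ≤ (u : ℝ) * α) := by
      rw [Finset.disjoint_left]
      intro x hx hx2
      exact (Finset.mem_sdiff.mp hx).2 (Finset.mem_filter.mp hx2).1
    have hcount := Finset.card_le_card hsub
    rw [Finset.card_union_of_disjoint hdisj, Finset.card_sdiff_of_subset hTS, hTcard, ← hn] at hcount
    have hun : u ≤ n := le_trans hu2 (by rw [hTcard]; omega)
    have hle : (1 : ℤ) - (u : ℤ) + ((S.filter fun x => (h : ℝ) * p x ≤ (u : ℝ) * α).card : ℤ) ≤ Mz := by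
      rw [hMz]
      exact Finset.le_sup' (fun v : ℕ => 1 - (v : ℤ) +
        ((S.filter fun x => (h : ℝ) * p x ≤ (v : ℝ) * α).card : ℤ)) (Finset.mem_Icc.mpr ⟨hu1, hun⟩)
    have hge : Mn + u ≤ (S.filter fun x => (h : ℝ) * p x ≤ (u : ℝ) * α).card := by omega
    zify at hge
    omega
  have hTX : ¬ ClosedX α p T := L2 α p r hα.1 hp0 hr hmono T hcond
  have hTt : n - Mn ≤ tval α p S := hTcard ▸ card_le_tval α p S T hTS hTX
  have : (n : ℤ) - tval α p S ≤ Mz := by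
    zify at hTt ht_le
    omega
  omega
end
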